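/- If C is symmetric positive semidefinite, D is symmetric positive definite, the full block matrix [[C, E],[Eᵀ, D]] is symmetric positive semidefinite, and Z is a positive diagonal matrix, then the DTM local coefficient matrix [[C + Z⁻¹, E],[Eᵀ, D]] is symmetric positive definite. -/

import Mathlib

open Matrix

theorem dtm_stmt15 {r m : ℕ}
    (C : Matrix (Fin r) (Fin r) ℝ) (E : Matrix (Fin r) (Fin m) ℝ)
    (D : Matrix (Fin m) (Fin m) ℝ)
    (hC : C.PosSemidef) (hD : D.PosDef)
    (hM : (Matrix.fromBlocks C E Eᵀ D).PosSemidef)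
    (z : Fin r → ℝ) (hz : ∀ i, 0 < z i) :
    (Matrix.fromBlocks (C + (Matrix.diagonal z)⁻¹) E Eᵀ D).PosDef := by
  have hZinv : (Matrix.diagonal z)⁻¹ = Matrix.diagonal (fun i => (z i)⁻¹) := by
    apply Matrix.inv_eq_right_inv
    rw [Matrix.diagonal_mul_diagonal,
      show (fun i => z i * (z i)⁻¹) = fun _ => (1:ℝ) from
        funext fun i => mul_inv_cancel₀ (hz i).ne', Matrix.diagonal_one]
  have hZ : (Matrix.diagonal (fun i => (z i)⁻¹)).PosDef :=
    Matrix.PosDef.diagonal fun i => inv_pos.mpr (hz i)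
  rw [hZinv]
  have hsplit : Matrix.fromBlocks (C + Matrix.diagonal fun i => (z i)⁻¹) E Eᵀ D
      = Matrix.fromBlocks C E Eᵀ D
        + Matrix.fromBlocks (Matrix.diagonal fun i => (z i)⁻¹) 0 0 0 := by
    rw [Matrix.fromBlocks_add]; simp
  rw [Matrix.posDef_iff_dotProduct_mulVec]
  constructor
  · rw [hsplit]
    exact hM.1.add ((Matrix.isHermitian_fromBlocks_iff).mpr
      ⟨hZ.1, by simp, by simp [Matrix.IsHermitian], by simp [Matrix.IsHermitian]⟩)
  · intro x hx
    have hxe : x = Sum.elim (x ∘ Sum.inl) (x ∘ Sum.inr) := by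
      funext i; cases i <;> rfl
    set u := x ∘ Sum.inl with hu
    set y := x ∘ Sum.inr with hy
    rw [hsplit, Matrix.add_mulVec, dotProduct_add, star_trivial]
    have h2 : x ⬝ᵥ (Matrix.fromBlocks (Matrix.diagonal fun i => (z i)⁻¹) 0 0 0).mulVec x
        = u ⬝ᵥ (Matrix.diagonal fun i => (z i)⁻¹).mulVec u := by
      rw [hxe, Matrix.fromBlocks_mulVec, sumElim_dotProduct_sumElim]
      simp
    rw [h2]
    have h1 : (0:ℝ) ≤ x ⬝ᵥ (Matrix.fromBlocks C E Eᵀ D).mulVec x := by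
      have := hM.dotProduct_mulVec_nonneg x
      simpa using this
    by_cases hu0 : u = 0
    · have hy0 : y ≠ 0 := by
        intro h
        apply hx
        rw [hxe, hu0, h]; simp
      have hDy : (0:ℝ) < y ⬝ᵥ D.mulVec y := by simpa using hD.dotProduct_mulVec_pos hy0
      have hq : x ⬝ᵥ (Matrix.fromBlocks C E Eᵀ D).mulVec x = y ⬝ᵥ D.mulVec y := by
        rw [hxe, Matrix.fromBlocks_mulVec, sumElim_dotProduct_sumElim, hu0]
        simp
      rw [hq, hu0]
      simpa using hDy
    · have hZu : (0:ℝ) < u ⬝ᵥ (Matrix.diagonal fun i => (z i)⁻¹).mulVec u := by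
        simpa using hZ.dotProduct_mulVec_pos hu0
      linarith
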